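/- arXiv:2206.04944 — 7 statements merged into one kernel-verified Lean document; each statement's English description precedes it below -/
import Mathlib

section
/- For any finite-state transducer M that emits no output before reading any input (i.e., B(p)(ε) = ∅ for all initial states p), the Mealy machine M' produced by the subset construction subsetT satisfies B_Γ(M') = B_Γ(M). -/
open Classical

/-- The outputting behaviour associated to a set-valued behaviour: the partial function
defined exactly where the behaviour is nonempty, where it agrees with the behaviour. -/
noncomputable def outBeh {σ γ : Type} (f : List σ → Set γ) : List σ → Option (Set γ) :=
  fun w => if f w = ∅ then none else some (f w)

/-- A finite-state transducer: a nondeterministic machine reading input symbols from `σ`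
(or `ε`, encoded `none`) and possibly emitting output symbols from `γ`. -/
structure FST (Q : Type) (σ : Type) (γ : Type) where
  step : Q → Option σ → Option γ → Q → Prop
  I : Set Q
  F : Set Q

namespace FST

variable {Q σ γ : Type} (M : FST Q σ γ)

/-- One ε-transition (possibly with output). -/
def EpsStep (p q : Q) : Prop := ∃ g, M.step p none g q

/-- `q` is in the ε-closure of `p`. -/
def EpsCl (p q : Q) : Prop := Relation.ReflTransGen M.EpsStep p q

/-- ε-closure of a set of states. -/
def epsClSet (S : Set Q) : Set Q := {q | ∃ p ∈ S, M.EpsCl p q}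

/-- `Reads p w q`: from `p` the machine may reach `q` reading the input word `w`,
with ε-transitions interleaved anywhere. -/
inductive Reads : Q → List σ → Q → Prop
  | refl (p : Q) : Reads p [] p
  | eps {p q r : Q} {w : List σ} : M.EpsStep p q → Reads q w r → Reads p w r
  | cons {p q r : Q} {a : σ} {w : List σ} (g : Option γ) :
      M.step p (some a) g q → Reads q w r → Reads p (a :: w) r

/-- `B(p)(ε)`: outputs emittable from `p` by ε-transitions only. -/
def behNil (p : Q) : Set γ := {g | ∃ q r, M.EpsCl p q ∧ M.step q none (some g) r}

/-- The behaviour of state `p`: `B(p)(ε)` is `behNil p`, and `B(p)(w·a)` is the set of outputs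
emitted on the transition reading the final `a` or by ε-transitions immediately afterwards. -/
def beh (p : Q) (w : List σ) : Set γ :=
  {g | (w = [] ∧ g ∈ M.behNil p) ∨
    ∃ w' a, w = w' ++ [a] ∧ ∃ (g' : Option γ) (q r : Q),
      M.Reads p w' q ∧ M.step q (some a) g' r ∧ (some g = g' ∨ g ∈ M.behNil r)}

/-- The behaviour of the transducer: the union of the behaviours of its initial states. -/
def machineBeh (w : List σ) : Set γ := ⋃ i ∈ M.I, M.beh i w

/-- Transition function `T` of the subset construction `subsetT`. -/
def Tfun (S : Set Q) (a : σ) : Set Q :=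
  M.epsClSet {q | ∃ p ∈ S, ∃ g, M.step p (some a) g q}

/-- Output function `G` of the subset construction `subsetT`. -/
def Gfun (S : Set Q) (a : σ) : Set γ :=
  {g | ∃ p ∈ S, ∃ q, M.step p (some a) (some g) q} ∪
  {g | ∃ p ∈ M.Tfun S a, ∃ q ∈ M.Tfun S a, M.step p none (some g) q}

/-- Iterating `T` along a word. -/
def runT (S : Set Q) (w : List σ) : Set Q := w.foldl M.Tfun S

/-- The behaviour of the state `S` of the Mealy machine `subsetT M`:
nothing is emitted on the empty word, and on `w·a` the output is `G(runT S w, a)`. -/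
def subsetBeh (S : Set Q) (w : List σ) : Set γ :=
  {g | ∃ w' a, w = w' ++ [a] ∧ g ∈ M.Gfun (M.runT S w') a}

/-- Transition function `T'` of the modified subset construction `subsetTC`,
which adds the initial closure to every transition target. -/
def TCfun (S : Set Q) (a : σ) : Set Q := M.Tfun S a ∪ M.epsClSet M.I

/-- Iterating `T'` along a word. -/
def runTC (S : Set Q) (w : List σ) : Set Q := w.foldl M.TCfun S

/-- The behaviour of the Mealy machine computed by `subsetTC`, from its initial state `ε(I)`. -/
def subsetTCBeh (w : List σ) : Set γ :=
  {g | ∃ w' a, w = w' ++ [a] ∧ g ∈ M.Gfun (M.runTC (M.epsClSet M.I) w') a}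

end FST

namespace FST

variable {Q σ γ : Type} (M : FST Q σ γ)

lemma epsClSet_closed {X : Set Q} {p q : Q} (hp : p ∈ M.epsClSet X)
    (hq : M.EpsStep p q) : q ∈ M.epsClSet X := by
  obtain ⟨x, hx, hcl⟩ := hp
  exact ⟨x, hx, hcl.tail hq⟩

lemma epsCl_reads {p q r : Q} {w : List σ} (h : M.EpsCl p q) (hr : M.Reads q w r) :
    M.Reads p w r := by
  induction h using Relation.ReflTransGen.head_induction_on with
  | refl => exact hr
  | head hstep _ ih => exact Reads.eps hstep ih

lemma reads_nil_aux : ∀ (p q : Q) (w : List σ), M.Reads p w q → w = [] → M.EpsCl p q := by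
  intro p q w h
  induction h with
  | refl => intro _; exact Relation.ReflTransGen.refl
  | eps hstep _ ih => intro he; exact Relation.ReflTransGen.head hstep (ih he)
  | cons g hstep _ _ => intro he; simp at he

lemma reads_nil_iff {p q : Q} : M.Reads p [] q ↔ M.EpsCl p q :=
  ⟨fun h => M.reads_nil_aux p q [] h rfl, fun h => M.epsCl_reads h (Reads.refl q)⟩

lemma reads_cons_aux : ∀ (p r : Q) (w0 : List σ), M.Reads p w0 r → ∀ (a : σ) (w : List σ),
    w0 = a :: w → ∃ q q' g, M.EpsCl p q ∧ M.step q (some a) g q' ∧ M.Reads q' w r := by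
  intro p r w0 h
  induction h with
  | refl => intro a w he; simp at he
  | eps hstep _ ih =>
    intro a w he
    obtain ⟨q, q', g, hcl, hs, hr⟩ := ih a w he
    exact ⟨q, q', g, Relation.ReflTransGen.head hstep hcl, hs, hr⟩
  | cons g hstep hr _ =>
    intro a w he
    obtain ⟨rfl, rfl⟩ := List.cons_eq_cons.mp he
    exact ⟨_, _, g, Relation.ReflTransGen.refl, hstep, hr⟩

lemma reads_cons_iff {p r : Q} {a : σ} {w : List σ} :
    M.Reads p (a :: w) r ↔
      ∃ q q' g, M.EpsCl p q ∧ M.step q (some a) g q' ∧ M.Reads q' w r := by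
  constructor
  · intro h; exact M.reads_cons_aux p r _ h a w rfl
  · rintro ⟨q, q', g, hcl, hs, hr⟩
    exact M.epsCl_reads hcl (Reads.cons g hs hr)

/-- `runT` on an ε-closed set computes exactly the reachable states. -/
lemma runT_eq (S : Set Q) (hS : ∀ p ∈ S, ∀ q, M.EpsStep p q → q ∈ S) :
    ∀ w : List σ, M.runT S w = {q | ∃ p ∈ S, M.Reads p w q} := by
  intro w
  induction w generalizing S with
  | nil =>
    ext q
    simp only [runT, List.foldl_nil, Set.mem_setOf_eq]
    constructor
    · intro hq; exact ⟨q, hq, Reads.refl q⟩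
    · rintro ⟨p, hp, hr⟩
      have hcl := (M.reads_nil_iff).1 hr
      clear hr
      induction hcl with
      | refl => exact hp
      | tail _ hstep ih => exact hS _ ih _ hstep
  | cons a w ih =>
    have hT : ∀ p ∈ M.Tfun S a, ∀ q, M.EpsStep p q → q ∈ M.Tfun S a := by
      intro p hp q hq
      exact M.epsClSet_closed hp hq
    have hrw : M.runT S (a :: w) = M.runT (M.Tfun S a) w := rfl
    rw [hrw, ih _ hT]
    ext r
    simp only [Set.mem_setOf_eq]
    constructor
    · rintro ⟨p, ⟨y, ⟨p0, hp0, g0, hs0⟩, hcl⟩, hr⟩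
      exact ⟨p0, hp0, (M.reads_cons_iff).2 ⟨p0, y, g0, Relation.ReflTransGen.refl, hs0,
        M.epsCl_reads hcl hr⟩⟩
    · rintro ⟨p, hp, hr⟩
      obtain ⟨q, q', g, hcl, hs, hr'⟩ := (M.reads_cons_iff).1 hr
      have hqS : q ∈ S := by
        clear hr hs
        induction hcl with
        | refl => exact hp
        | tail _ hstep ih2 => exact hS _ ih2 _ hstep
      exact ⟨q', ⟨q', ⟨q, hqS, g, hs⟩, Relation.ReflTransGen.refl⟩, hr'⟩

lemma runT_init (w : List σ) :
    M.runT (M.epsClSet M.I) w = {q | ∃ p ∈ M.I, M.Reads p w q} := by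
  rw [M.runT_eq _ (fun p hp q hq => M.epsClSet_closed hp hq)]
  ext q
  simp only [Set.mem_setOf_eq]
  constructor
  · rintro ⟨p, ⟨i, hi, hcl⟩, hr⟩
    exact ⟨i, hi, M.epsCl_reads hcl hr⟩
  · rintro ⟨i, hi, hr⟩
    exact ⟨i, ⟨i, hi, Relation.ReflTransGen.refl⟩, hr⟩

end FST

/-- For any FST `M` that emits no output before reading any input,
the Mealy machine produced by the subset construction `subsetT` (whose initial state is
`ε(I)`) has the same outputting behaviour as `M`. -/
theorem stmt3 {Q σ γ : Type} (M : FST Q σ γ) (h : ∀ p ∈ M.I, M.behNil p = ∅) :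
    outBeh (M.subsetBeh (M.epsClSet M.I)) = outBeh M.machineBeh := by
  have key : M.subsetBeh (M.epsClSet M.I) = M.machineBeh := by
    funext w
    rcases List.eq_nil_or_concat w with rfl | ⟨u, b, rfl⟩
    · ext g
      simp only [FST.subsetBeh, FST.machineBeh, Set.mem_setOf_eq, Set.mem_iUnion]
      constructor
      · rintro ⟨w', a, he, -⟩; simp at he
      · rintro ⟨i, hi, hg⟩
        rcases hg with ⟨-, hg⟩ | ⟨w', a, he, -⟩
        · rw [h i hi] at hg; exact hg.elim
        · simp at he
    · rw [List.concat_eq_append]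
      have hR := M.runT_init u
      ext g
      simp only [FST.subsetBeh, FST.machineBeh, Set.mem_setOf_eq, Set.mem_iUnion]
      constructor
      · rintro ⟨w'', a'', he, hg⟩
        obtain ⟨rfl, ha⟩ := List.append_inj' he rfl
        obtain rfl : b = a'' := by simpa using ha
        rcases hg with ⟨p, hp, q, hs⟩ | ⟨p, hp, q, hq, hs⟩
        · rw [hR] at hp
          obtain ⟨i, hi, hr⟩ := hp
          exact ⟨i, hi, Or.inr ⟨u, b, rfl, some g, p, q, hr, hs, Or.inl rfl⟩⟩
        · obtain ⟨y, ⟨p0, hp0, g0, hs0⟩, hcl⟩ := hp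
          rw [hR] at hp0
          obtain ⟨i, hi, hr⟩ := hp0
          exact ⟨i, hi, Or.inr ⟨u, b, rfl, g0, p0, y, hr, hs0, Or.inr ⟨p, q, hcl, hs⟩⟩⟩
      · rintro ⟨i, hi, hg⟩
        rcases hg with ⟨he, -⟩ | ⟨w'', a'', he, g', p, r, hr, hs, hc⟩
        · simp at he
        · obtain ⟨rfl, ha⟩ := List.append_inj' he rfl
          obtain rfl : b = a'' := by simpa using ha
          refine ⟨u, b, rfl, ?_⟩
          have hpR : p ∈ M.runT (M.epsClSet M.I) u := by
            rw [hR]; exact ⟨i, hi, hr⟩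
          rcases hc with hc | hc
          · exact Or.inl ⟨p, hpR, r, hc ▸ hs⟩
          · obtain ⟨q', r', hcl, hs'⟩ := hc
            have hq' : q' ∈ M.Tfun (M.runT (M.epsClSet M.I) u) b :=
              ⟨r, ⟨p, hpR, g', hs⟩, hcl⟩
            have hr' : r' ∈ M.Tfun (M.runT (M.epsClSet M.I) u) b :=
              M.epsClSet_closed hq' ⟨some g, hs'⟩
            exact Or.inr ⟨q', hq', r', hr', hs'⟩
  rw [key]
end

section
/- In a complete Mealy machine, two states p and q have the same outputting behaviour if and only if they have the same behaviour, i.e., if and only if for every input word s and symbol σ, the output emitted on the last symbol when reading sσ from p equals that emitted when reading sσ from q. -/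
/-- A Mealy machine with (possibly partial) transition and output functions, bundled as
`step : Q → σ → Option (Q × Option Λ)`: `step p a = some (q, o)` means that from `p` reading `a`
the machine moves to `q` emitting `o` (with `o = none` meaning no output). -/
structure Mealy (Q : Type) (σ : Type) (Λ : Type) where
  step : Q → σ → Option (Q × Option Λ)
  init : Q

namespace Mealy

variable {Q σ Λ : Type} (M : Mealy Q σ Λ)

/-- A Mealy machine is complete when its transition/output functions are total. -/
def Complete : Prop := ∀ q a, (M.step q a).isSome

/-- `O(p, w)`: the output emitted on the last symbol when reading `w` from `p`;
`none` if `w` is empty or the (partial) run is undefined, `some o` otherwise. -/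
def outFrom : Q → List σ → Option (Option Λ)
  | _, [] => none
  | p, [a] => (M.step p a).map Prod.snd
  | p, a :: b :: w => (M.step p a).bind fun x => outFrom x.1 (b :: w)

/-- Output on the last symbol when reading a word from the initial state. -/
def out (w : List σ) : Option (Option Λ) := M.outFrom M.init w

/-- The outputting behaviour of state `p`: the partial function defined on exactly those words
after which a (nonempty) output is emitted, mapping them to that output. -/
def outBehFrom (p : Q) : List σ → Option Λ := fun w =>
  match M.outFrom p w with
  | some (some o) => some o
  | _ => none

/-- The outputting behaviour of the machine. -/
def outputting : List σ → Option Λ := M.outBehFrom M.init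

end Mealy

/-- For a Mealy machine whose output alphabet consists of sets of `γ` (`Λ ⊆ P(Γ)`),
the set of output symbols emitted after reading `w` (empty if no output). -/
def Mealy.behSet {Q σ γ : Type} (M : Mealy Q σ (Set γ)) (w : List σ) : Set γ :=
  {g | ∃ S : Set γ, M.out w = some (some S) ∧ g ∈ S}

/-- An isomorphism of Mealy machines: a bijection on states preserving the initial state and
the transition/output structure. -/
structure MealyIso {Q Q' σ Λ : Type} (M : Mealy Q σ Λ) (N : Mealy Q' σ Λ) where
  toEquiv : Q ≃ Q'
  init_eq : toEquiv M.init = N.init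
  step_eq : ∀ q a, N.step (toEquiv q) a = (M.step q a).map (fun x => (toEquiv x.1, x.2))

private theorem outFrom_isSome {Q σ Λ : Type} (M : Mealy Q σ Λ) (hM : M.Complete) :
    ∀ (p : Q) (s : List σ) (a : σ), ∃ o, M.outFrom p (s ++ [a]) = some o := by
  intro p s
  induction s generalizing p with
  | nil =>
    intro a
    obtain ⟨x, hx⟩ := Option.isSome_iff_exists.mp (hM p a)
    exact ⟨x.2, by simp [Mealy.outFrom, hx]⟩
  | cons b t ih =>
    intro a
    obtain ⟨x, hx⟩ := Option.isSome_iff_exists.mp (hM p b)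
    obtain ⟨o, ho⟩ := ih x.1 a
    refine ⟨o, ?_⟩
    cases t with
    | nil => simpa [Mealy.outFrom, hx] using ho
    | cons c u => simpa [Mealy.outFrom, hx] using ho

/-- In a complete Mealy machine, two states have the same outputting
behaviour iff they have the same behaviour, i.e. iff for every input word `s` and symbol `a`
the output emitted on the last symbol when reading `s·a` from `p` equals that from `q`. -/
theorem stmt8 {Q σ Λ : Type} (M : Mealy Q σ Λ) (hM : M.Complete) (p q : Q) :
    M.outBehFrom p = M.outBehFrom q ↔
      ∀ (s : List σ) (a : σ), M.outFrom p (s ++ [a]) = M.outFrom q (s ++ [a]) := by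
  constructor
  · intro h s a
    obtain ⟨o₁, h₁⟩ := outFrom_isSome M hM p s a
    obtain ⟨o₂, h₂⟩ := outFrom_isSome M hM q s a
    have hb : M.outBehFrom p (s ++ [a]) = M.outBehFrom q (s ++ [a]) := congrFun h _
    unfold Mealy.outBehFrom at hb
    rw [h₁, h₂] at hb
    rw [h₁, h₂]
    cases o₁ <;> cases o₂ <;> simp_all
  · intro h
    funext w
    rcases List.eq_nil_or_concat w with rfl | ⟨s, a, rfl⟩
    · simp [Mealy.outBehFrom, Mealy.outFrom]
    · simp only [Mealy.outBehFrom, List.concat_eq_append, h s a]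
end

section
/- For every Mealy machine, the minimal complete Mealy machine with the same outputting behaviour is unique up to isomorphism. -/
namespace Mealy

variable {Q σ Λ : Type} (M : Mealy Q σ Λ)

-- helpers
noncomputable def stepS (hc : M.Complete) (q : Q) (a : σ) : Q × Option Λ :=
  (M.step q a).get (hc q a)

theorem step_eq_stepS (hc : M.Complete) (q : Q) (a : σ) :
    M.step q a = some (M.stepS hc q a) := (Option.some_get (hc q a)).symm

@[simp] theorem outFrom_nil (p : Q) : M.outFrom p ([] : List σ) = none := rfl

theorem outFrom_single (p : Q) (a : σ) : M.outFrom p [a] = (M.step p a).map Prod.snd := rfl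

theorem outFrom_cons₂ (p : Q) (a b : σ) (w : List σ) :
    M.outFrom p (a :: b :: w) = (M.step p a).bind fun x => M.outFrom x.1 (b :: w) := rfl

theorem outFrom_single' (hc : M.Complete) (p : Q) (a : σ) :
    M.outFrom p [a] = some (M.stepS hc p a).2 := by
  rw [outFrom_single, M.step_eq_stepS hc, Option.map_some]

theorem outFrom_cons₂' (hc : M.Complete) (p : Q) (a b : σ) (w : List σ) :
    M.outFrom p (a :: b :: w) = M.outFrom (M.stepS hc p a).1 (b :: w) := by
  rw [outFrom_cons₂, M.step_eq_stepS hc, Option.bind_some]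

noncomputable def runFrom (hc : M.Complete) : Q → List σ → Q
  | q, [] => q
  | q, a :: w => runFrom hc (M.stepS hc q a).1 w

@[simp] theorem runFrom_nil (hc : M.Complete) (p : Q) : M.runFrom hc p [] = p := rfl

@[simp] theorem runFrom_cons (hc : M.Complete) (p : Q) (a : σ) (w : List σ) :
    M.runFrom hc p (a :: w) = M.runFrom hc (M.stepS hc p a).1 w := rfl

theorem runFrom_append (hc : M.Complete) (p : Q) (w v : List σ) :
    M.runFrom hc p (w ++ v) = M.runFrom hc (M.runFrom hc p w) v := by
  induction w generalizing p with
  | nil => simp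
  | cons a w ih => simp [ih]

theorem outFrom_append (hc : M.Complete) (p : Q) (w v : List σ) (hv : v ≠ []) :
    M.outFrom p (w ++ v) = M.outFrom (M.runFrom hc p w) v := by
  induction w generalizing p with
  | nil => simp
  | cons a w ih =>
    have h : w ++ v ≠ [] := by simp [hv]
    rcases List.exists_cons_of_ne_nil h with ⟨b, t, ht⟩
    rw [List.cons_append, runFrom_cons]
    rw [show a :: (w ++ v) = a :: (w ++ v) from rfl]
    rw [ht, M.outFrom_cons₂' hc, ← ht, ih]

theorem outFrom_isSome (hc : M.Complete) (p : Q) (w : List σ) (hw : w ≠ []) :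
    (M.outFrom p w).isSome := by
  induction w generalizing p with
  | nil => simp at hw
  | cons a w ih =>
    cases w with
    | nil => rw [M.outFrom_single' hc]; simp
    | cons b t => rw [M.outFrom_cons₂' hc]; exact ih _ (by simp)

end Mealy

/-- If two complete machines have equal outputting behaviour from given states,
then their `outFrom` functions agree. -/
theorem outFrom_eq_of_beh {Q Q' σ Λ : Type} (M : Mealy Q σ Λ) (N : Mealy Q' σ Λ)
    (hcM : M.Complete) (hcN : N.Complete) (p : Q) (q : Q')
    (h : M.outBehFrom p = N.outBehFrom q) (w : List σ) :
    M.outFrom p w = N.outFrom q w := by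
  cases w with
  | nil => simp
  | cons a t =>
    have h1 := M.outFrom_isSome hcM p (a :: t) (by simp)
    have h2 := N.outFrom_isSome hcN q (a :: t) (by simp)
    rcases Option.isSome_iff_exists.1 h1 with ⟨x, hx⟩
    rcases Option.isSome_iff_exists.1 h2 with ⟨y, hy⟩
    have hb := congrFun h (a :: t)
    simp only [Mealy.outBehFrom, hx, hy] at hb ⊢
    cases x <;> cases y <;> simp_all

open Classical
/-- Merge state `q` into an equivalent state `p`. -/
noncomputable def Mealy.merge {Q σ Λ : Type} (M : Mealy Q σ Λ) (hc : M.Complete) (p q : Q)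
    (hpq : p ≠ q) : Mealy {r : Q // r ≠ q} σ Λ where
  step r a := some (⟨if (M.stepS hc r.1 a).1 = q then p else (M.stepS hc r.1 a).1,
      by split <;> simp_all⟩, (M.stepS hc r.1 a).2)
  init := if h : M.init = q then ⟨p, hpq⟩ else ⟨M.init, h⟩

theorem Mealy.merge_complete {Q σ Λ : Type} (M : Mealy Q σ Λ) (hc : M.Complete) (p q : Q)
    (hpq : p ≠ q) : (M.merge hc p q hpq).Complete := fun _ _ => rfl

theorem Mealy.merge_step {Q σ Λ : Type} (M : Mealy Q σ Λ) (hc : M.Complete) (p q : Q)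
    (hpq : p ≠ q) (r : {r : Q // r ≠ q}) (a : σ) :
    (M.merge hc p q hpq).step r a = some (⟨if (M.stepS hc r.1 a).1 = q then p
      else (M.stepS hc r.1 a).1, by split <;> simp_all⟩, (M.stepS hc r.1 a).2) := rfl

theorem Mealy.merge_outFrom {Q σ Λ : Type} (M : Mealy Q σ Λ) (hc : M.Complete) (p q : Q)
    (hpq : p ≠ q) (heq : ∀ w, M.outFrom p w = M.outFrom q w)
    (w : List σ) (r : {r : Q // r ≠ q}) :
    (M.merge hc p q hpq).outFrom r w = M.outFrom r.1 w := by
  induction w generalizing r with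
  | nil => simp
  | cons a t ih =>
    cases t with
    | nil =>
      rw [Mealy.outFrom_single, Mealy.outFrom_single' M hc, Mealy.merge_step, Option.map_some]
    | cons b t =>
      rw [Mealy.outFrom_cons₂, Mealy.outFrom_cons₂' M hc, Mealy.merge_step, Option.bind_some, ih]
      by_cases h : (M.stepS hc r.1 a).1 = q
      · simp only [h, if_pos]
        rw [heq]
      · simp only [h, if_neg, not_false_iff]

theorem Mealy.merge_init {Q σ Λ : Type} (M : Mealy Q σ Λ) (hc : M.Complete) (p q : Q)
    (hpq : p ≠ q) :
    (M.merge hc p q hpq).init = if h : M.init = q then ⟨p, hpq⟩ else ⟨M.init, h⟩ := rfl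

/-- In a minimal complete machine, states with equal `outFrom` are equal. -/
theorem minimal_distinct {Q σ Λ Q' : Type} [Fintype Q'] (M : Mealy Q σ Λ) (N : Mealy Q' σ Λ)
    (hc : N.Complete) (hb : N.outputting = M.outputting)
    (hm : ∀ (Q'' : Type) [Fintype Q''] (N' : Mealy Q'' σ Λ),
      N'.Complete → N'.outputting = M.outputting → Fintype.card Q' ≤ Fintype.card Q'')
    (p q : Q') (h : ∀ w, N.outFrom p w = N.outFrom q w) : p = q := by
  by_contra hpq
  set M' := N.merge hc p q hpq with hM'
  have hout : ∀ w, M'.outFrom M'.init w = N.outFrom N.init w := by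
    intro w
    rw [hM', Mealy.merge_outFrom N hc p q hpq h, Mealy.merge_init]
    split_ifs with hi
    · exact (h w).trans (by rw [hi])
    · rfl
  have hbeh : M'.outputting = N.outputting := funext fun w => by
    unfold Mealy.outputting Mealy.outBehFrom
    rw [hout]
  have hle := hm _ M' (N.merge_complete hc p q hpq) (hbeh.trans hb)
  have hlt : Fintype.card {r : Q' // r ≠ q} < Fintype.card Q' :=
    Fintype.card_subtype_lt (p := fun r => r ≠ q) (x := q) (by simp)
  omega

/-- Restriction to reachable states. -/
noncomputable def Mealy.restrict {Q σ Λ : Type} (N : Mealy Q σ Λ) (hc : N.Complete) :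
    Mealy {p : Q // ∃ w, N.runFrom hc N.init w = p} σ Λ where
  step r a := some (⟨(N.stepS hc r.1 a).1, by
      obtain ⟨w, hw⟩ := r.2
      exact ⟨w ++ [a], by rw [N.runFrom_append hc, hw]; simp⟩⟩, (N.stepS hc r.1 a).2)
  init := ⟨N.init, ⟨[], rfl⟩⟩

theorem Mealy.restrict_complete {Q σ Λ : Type} (N : Mealy Q σ Λ) (hc : N.Complete) :
    (N.restrict hc).Complete := fun _ _ => rfl

theorem Mealy.restrict_outFrom {Q σ Λ : Type} (N : Mealy Q σ Λ) (hc : N.Complete)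
    (w : List σ) (r : {p : Q // ∃ w, N.runFrom hc N.init w = p}) :
    (N.restrict hc).outFrom r w = N.outFrom r.1 w := by
  induction w generalizing r with
  | nil => simp
  | cons a t ih =>
    cases t with
    | nil =>
      rw [Mealy.outFrom_single, Mealy.outFrom_single' N hc]
      rfl
    | cons b t =>
      rw [Mealy.outFrom_cons₂, Mealy.outFrom_cons₂' N hc]
      show ((N.restrict hc).step r a).bind _ = _
      rw [show (N.restrict hc).step r a = some (⟨(N.stepS hc r.1 a).1, _⟩, (N.stepS hc r.1 a).2)
        from rfl, Option.bind_some, ih]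

/-- In a minimal complete machine, every state is reachable. -/
theorem minimal_reach {Q σ Λ Q' : Type} [Fintype Q'] (M : Mealy Q σ Λ) (N : Mealy Q' σ Λ)
    (hc : N.Complete) (hb : N.outputting = M.outputting)
    (hm : ∀ (Q'' : Type) [Fintype Q''] (N' : Mealy Q'' σ Λ),
      N'.Complete → N'.outputting = M.outputting → Fintype.card Q' ≤ Fintype.card Q'')
    (p : Q') : ∃ w, N.runFrom hc N.init w = p := by
  by_contra hq
  have hbeh : (N.restrict hc).outputting = N.outputting := funext fun w => by
    unfold Mealy.outputting Mealy.outBehFrom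
    rw [Mealy.restrict_outFrom]
    rfl
  have hle := hm _ (N.restrict hc) (N.restrict_complete hc) (hbeh.trans hb)
  have hlt : Fintype.card {r : Q' // ∃ w, N.runFrom hc N.init w = r} < Fintype.card Q' :=
    Fintype.card_subtype_lt (x := p) hq
  omega


/-- For every Mealy machine `M`, the minimal complete Mealy machine with the
same outputting behaviour is unique up to isomorphism: any two complete machines with the
outputting behaviour of `M`, each having the fewest states among all such machines, are
isomorphic. -/
theorem stmt9 {Q σ Λ Q₁ Q₂ : Type} [Fintype Q₁] [Fintype Q₂] (M : Mealy Q σ Λ)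
    (N₁ : Mealy Q₁ σ Λ) (N₂ : Mealy Q₂ σ Λ)
    (h₁c : N₁.Complete) (h₂c : N₂.Complete)
    (h₁b : N₁.outputting = M.outputting) (h₂b : N₂.outputting = M.outputting)
    (h₁m : ∀ (Q' : Type) [Fintype Q'] (N : Mealy Q' σ Λ),
      N.Complete → N.outputting = M.outputting → Fintype.card Q₁ ≤ Fintype.card Q')
    (h₂m : ∀ (Q' : Type) [Fintype Q'] (N : Mealy Q' σ Λ),
      N.Complete → N.outputting = M.outputting → Fintype.card Q₂ ≤ Fintype.card Q') :
    Nonempty (MealyIso N₁ N₂) := by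
  classical
  set run₁ : List σ → Q₁ := N₁.runFrom h₁c N₁.init with hrun₁
  set run₂ : List σ → Q₂ := N₂.runFrom h₂c N₂.init with hrun₂
  have d₁ := minimal_distinct M N₁ h₁c h₁b h₁m
  have d₂ := minimal_distinct M N₂ h₂c h₂b h₂m
  have r₁ : ∀ p, ∃ w, run₁ w = p := minimal_reach M N₁ h₁c h₁b h₁m
  have r₂ : ∀ p, ∃ w, run₂ w = p := minimal_reach M N₂ h₂c h₂b h₂m
  have h0 : ∀ v, N₁.outFrom N₁.init v = N₂.outFrom N₂.init v :=
    outFrom_eq_of_beh N₁ N₂ h₁c h₂c _ _ (h₁b.trans h₂b.symm)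
  have key : ∀ w v, N₁.outFrom (run₁ w) v = N₂.outFrom (run₂ w) v := by
    intro w v
    rcases eq_or_ne v [] with rfl | hv
    · simp
    · rw [hrun₁, hrun₂, ← N₁.outFrom_append h₁c _ w v hv, ← N₂.outFrom_append h₂c _ w v hv]
      exact h0 _
  set f : Q₁ → Q₂ := fun p => run₂ (Classical.choose (r₁ p)) with hfdef
  have hf : ∀ p, run₁ (Classical.choose (r₁ p)) = p := fun p => Classical.choose_spec (r₁ p)
  have welldef : ∀ w w', run₁ w = run₁ w' → run₂ w = run₂ w' := by
    intro w w' h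
    exact d₂ _ _ fun v => by rw [← key w v, h, key w' v]
  have hfrun : ∀ w, f (run₁ w) = run₂ w := fun w => welldef _ w (hf _)
  have e : ∀ p v, N₁.outFrom p v = N₂.outFrom (f p) v := by
    intro p v
    conv_lhs => rw [← hf p]
    exact key _ v
  have inj : Function.Injective f := by
    intro p p' h
    exact d₁ p p' fun v => by rw [e p v, h, ← e p' v]
  have surj : Function.Surjective f := by
    intro q
    obtain ⟨w, hw⟩ := r₂ q
    exact ⟨run₁ w, (hfrun w).trans hw⟩
  refine ⟨⟨Equiv.ofBijective f ⟨inj, surj⟩, ?_, ?_⟩⟩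
  · show f N₁.init = N₂.init
    exact hfrun []
  · intro p a
    show N₂.step (f p) a = _
    rw [N₂.step_eq_stepS h₂c, N₁.step_eq_stepS h₁c, Option.map_some]
    have snd : (N₂.stepS h₂c (f p) a).2 = (N₁.stepS h₁c p a).2 := by
      have := e p [a]
      rw [N₁.outFrom_single' h₁c, N₂.outFrom_single' h₂c] at this
      exact (Option.some.inj this).symm
    have fst : (N₂.stepS h₂c (f p) a).1 = f (N₁.stepS h₁c p a).1 := by
      set w := Classical.choose (r₁ p) with hwdef
      have h1 : run₁ (w ++ [a]) = (N₁.stepS h₁c p a).1 := by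
        rw [hrun₁, N₁.runFrom_append h₁c]
        rw [← hrun₁, hf p]
        simp
      have h2 : run₂ (w ++ [a]) = (N₂.stepS h₂c (f p) a).1 := by
        rw [hrun₂, N₂.runFrom_append h₂c]
        simp [← hrun₂]
        rfl
      rw [← h1, hfrun, h2]
    show some ((N₂.stepS h₂c (f p) a)) = some ((f (N₁.stepS h₁c p a).1), (N₁.stepS h₁c p a).2)
    rw [← fst, ← snd]
end

section
/- The state-merging condition of Solovev (requiring orthogonality of all transition rules of two states with disjoint successor sets) is not necessary for behaviour-preserving merging: in the one-input-symbol Mealy machine with states p,q,r and transitions p→q, q→r, r→p all on the same input with no output, all three states have identical behaviour and the machine is equivalent to a one-state machine, yet no pair of transition rules is orthogonal. -/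
/-- The three-state cyclic Mealy machine over the single input symbol `()`:
`p →^σ q →^σ r →^σ p`, each transition emitting no output. -/
def cyc3 (γ : Type) : Mealy (Fin 3) Unit γ := ⟨fun i _ => some (i + 1, none), 0⟩

/-- The one-state Mealy machine with a σ self-loop and no output. -/
def loop1 (γ : Type) : Mealy Unit Unit γ := ⟨fun _ _ => some ((), none), ()⟩

/-- Orthogonality of transition rules (Boolean vectors over the input variables): some
position holds `1` in one rule and `0` in the other. -/
def Orthogonal {σ : Type} (X Y : σ → Bool) : Prop :=
  ∃ s, (X s = true ∧ Y s = false) ∨ (X s = false ∧ Y s = true)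

/-- The transition rule of the (unique) transition departing from state `i` of `cyc3`:
the vector of input symbols initiating it. -/
def ruleOf (γ : Type) (i : Fin 3) : Unit → Bool := fun s => ((cyc3 γ).step i s).isSome


lemma cyc3_outFrom (γ : Type) : ∀ (w : List Unit) (p : Fin 3),
    (cyc3 γ).outFrom p w = (if w = [] then none else some none)
  | [], _ => rfl
  | [_], _ => rfl
  | _ :: _ :: w, p => by
    simp only [Mealy.outFrom, cyc3, Option.bind_some]
    exact cyc3_outFrom γ (_ :: w) (p + 1)

lemma loop1_outFrom (γ : Type) : ∀ (w : List Unit) (p : Unit),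
    (loop1 γ).outFrom p w = (if w = [] then none else some none)
  | [], _ => rfl
  | [_], _ => rfl
  | _ :: _ :: w, _ => by
    simp only [Mealy.outFrom, loop1, Option.bind_some]
    exact loop1_outFrom γ (_ :: w) ()

/-- Solovev's orthogonality condition is not necessary for
behaviour-preserving merging: in the cyclic machine `cyc3`, all three states have identical
behaviour and the machine is equivalent to the one-state machine `loop1`, yet no pair of
transition rules is orthogonal. -/
theorem stmt10 (γ : Type) :
    (∀ p q : Fin 3, ∀ w : List Unit, (cyc3 γ).outFrom p w = (cyc3 γ).outFrom q w) ∧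
    (cyc3 γ).outputting = (loop1 γ).outputting ∧
    (∀ i j : Fin 3, ¬ Orthogonal (ruleOf γ i) (ruleOf γ j)) := by
  refine ⟨fun p q w => by rw [cyc3_outFrom, cyc3_outFrom], ?_, ?_⟩
  · funext w
    simp only [Mealy.outputting, Mealy.outBehFrom, Mealy.out, cyc3_outFrom, loop1_outFrom]
  · rintro i j ⟨s, ⟨h1, h2⟩ | ⟨h1, h2⟩⟩ <;> simp [ruleOf, cyc3] at h1 h2
end

section
/- Let N be an NFA (or FST) with initial-state closure i, and let subsetTC be the subset construction modified so that T'(S,σ) = ε({q | ∃p∈S, p →^σ q}) ∪ {i}. Then the resulting Mealy machine M satisfies, for all words w ∈ Σ*, that the state reached after reading w is ⋃_{w'' suffix of w} ε(reach(i, w'')) ∪ {states of i}, i.e., the union of the subset-construction states reached from the initial closure on every suffix of w. -/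
lemma suffix_concat_iff' {α : Type} {x w : List α} {a : α} :
    x <:+ w ++ [a] ↔ x = [] ∨ ∃ y, y <:+ w ∧ x = y ++ [a] := by
  constructor
  · intro h
    rcases List.eq_nil_or_concat x with rfl | ⟨y, b, rfl⟩
    · exact Or.inl rfl
    · obtain ⟨t, ht⟩ := h
      rw [List.concat_eq_append, ← List.append_assoc] at ht
      obtain ⟨h1, h2⟩ := List.append_inj' ht rfl
      simp only [List.cons.injEq, and_true] at h2
      subst h2
      simp only [List.concat_eq_append]
      exact Or.inr ⟨y, ⟨t, h1⟩, rfl⟩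
  · rintro (rfl | ⟨y, ⟨t, rfl⟩, rfl⟩)
    · exact List.nil_suffix
    · exact ⟨t, by simp⟩

lemma Tfun_exists {Q σ γ : Type} (M : FST Q σ γ) {ι : Type} (P : ι → Prop)
    (f : ι → Set Q) (a : σ) :
    M.Tfun {q | ∃ i, P i ∧ q ∈ f i} a = {q | ∃ i, P i ∧ q ∈ M.Tfun (f i) a} := by
  ext q
  simp only [FST.Tfun, FST.epsClSet, Set.mem_setOf_eq]
  constructor
  · rintro ⟨p, ⟨r, ⟨i, hi, hr⟩, g, hs⟩, hc⟩
    exact ⟨i, hi, p, ⟨r, hr, g, hs⟩, hc⟩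
  · rintro ⟨i, hi, p, ⟨r, hr, g, hs⟩, hc⟩
    exact ⟨p, ⟨r, ⟨i, hi, hr⟩, g, hs⟩, hc⟩

lemma runT_concat {Q σ γ : Type} (M : FST Q σ γ) (S : Set Q) (w : List σ) (a : σ) :
    M.runT S (w ++ [a]) = M.Tfun (M.runT S w) a := by
  simp [FST.runT]

lemma runTC_concat {Q σ γ : Type} (M : FST Q σ γ) (S : Set Q) (w : List σ) (a : σ) :
    M.runTC S (w ++ [a]) = M.TCfun (M.runTC S w) a := by
  simp [FST.runTC]

/-- In the Mealy machine computed by `subsetTC` (whose initial state is the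
closure `ε(I)`), the state reached after reading `w` is the union, over all suffixes `w''` of
`w`, of the subset-construction states reached from `ε(I)` on `w''` (the suffix `w'' = []`
contributing the states of `ε(I)` itself). -/
theorem stmt13 {Q σ γ : Type} (M : FST Q σ γ) (w : List σ) :
    M.runTC (M.epsClSet M.I) w =
      {q | ∃ w'' : List σ, w'' <:+ w ∧ q ∈ M.runT (M.epsClSet M.I) w''} := by
  induction w using List.reverseRecOn with
  | nil =>
    ext q
    simp [FST.runTC, FST.runT]
  | append_singleton w a ih =>
    rw [runTC_concat, ih, FST.TCfun, Tfun_exists]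
    ext q
    simp only [Set.mem_union, Set.mem_setOf_eq]
    constructor
    · rintro (⟨y, hy, hq⟩ | hq)
      · exact ⟨y ++ [a], suffix_concat_iff'.2 (Or.inr ⟨y, hy, rfl⟩),
          (runT_concat M _ y a).symm ▸ hq⟩
      · exact ⟨[], List.nil_suffix, hq⟩
    · rintro ⟨x, hx, hq⟩
      rcases suffix_concat_iff'.1 hx with rfl | ⟨y, hy, rfl⟩
      · exact Or.inr hq
      · rw [runT_concat] at hq
        exact Or.inl ⟨y, hy, hq⟩
end

section
/- For any FST M (derived from a pattern regexp e) that emits no output before reading input, the Mealy machine computed by subsetTC performs complete regexp matching of e: for every w ∈ Σ*, its output on w is the union over all decompositions w = w'w'' of B(e)(w''). -/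
open Classical

/-- The behaviour of a pattern regexp over `U = σ × (γ ∪ {ε})` (encoded as `σ × Option γ`):
`B(e)(w·a)` is the set of outputs `g` such that some word `u·(a,g)` in the language of `e`
has input projection `w·a`.  On the empty word it is empty (no letter of `U` has `ε` input). -/
def rBeh {σ γ : Type} (e : RegularExpression (σ × Option γ)) (w : List σ) : Set γ :=
  {g | ∃ (u : List (σ × Option γ)) (a : σ),
    w = u.map Prod.fst ++ [a] ∧ u ++ [(a, some g)] ∈ e.matches'}

/-- The behaviour as a *partial* function: defined exactly on input projections of words in
the language of `e`. -/
noncomputable def pBeh {σ γ : Type} (e : RegularExpression (σ × Option γ)) :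
    List σ → Option (Set γ) := fun w =>
  if (∃ u ∈ e.matches', u.map Prod.fst = w) then some (rBeh e w) else none

namespace FST

variable {Q σ γ : Type} (M : FST Q σ γ)

lemma epsClSet_step {S : Set Q} {p q : Q} (hp : p ∈ M.epsClSet S) (h : M.EpsStep p q) :
    q ∈ M.epsClSet S := by
  obtain ⟨r, hr, hc⟩ := hp
  exact ⟨r, hr, hc.tail h⟩

lemma Gfun_eq (S : Set Q) (a : σ) :
    M.Gfun S a = {g | ∃ p ∈ S, ∃ (g' : Option γ) (q : Q),
      M.step p (some a) g' q ∧ (some g = g' ∨ g ∈ M.behNil q)} := by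
  ext g
  constructor
  · rintro (⟨p, hp, q, hs⟩ | ⟨p, hp, q, _, hs⟩)
    · exact ⟨p, hp, some g, q, hs, Or.inl rfl⟩
    · obtain ⟨r, ⟨p0, hp0, g'', hst⟩, hc⟩ := hp
      exact ⟨p0, hp0, g'', r, hst, Or.inr ⟨p, q, hc, hs⟩⟩
  · rintro ⟨p, hp, g', q, hs, (rfl | ⟨q1, r1, hc, hst⟩)⟩
    · exact Or.inl ⟨p, hp, q, hs⟩
    · refine Or.inr ⟨q1, ⟨q, ⟨p, hp, g', hs⟩, hc⟩, r1, ?_, hst⟩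
      exact M.epsClSet_step ⟨q, ⟨p, hp, g', hs⟩, hc⟩ ⟨some g, hst⟩

lemma reads_nil_of {p q : Q} {w : List σ} (h : M.Reads p w q) (hw : w = []) : M.EpsCl p q := by
  induction h with
  | refl => exact Relation.ReflTransGen.refl
  | eps hstep _ ih => exact Relation.ReflTransGen.head hstep (ih hw)
  | cons g hstep h ih => exact absurd hw (by simp)

lemma reads_of_epsCl {p q : Q} (h : M.EpsCl p q) : M.Reads p [] q := by
  induction h using Relation.ReflTransGen.head_induction_on with
  | refl => exact Reads.refl q
  | head hstep _ ih => exact Reads.eps hstep ih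

lemma reads_append_mk {p q r : Q} {u v : List σ} (h1 : M.Reads p u q) (h2 : M.Reads q v r) :
    M.Reads p (u ++ v) r := by
  induction h1 with
  | refl => exact h2
  | eps hstep _ ih => exact Reads.eps hstep (ih h2)
  | cons g hstep _ ih => exact Reads.cons g hstep (ih h2)

lemma reads_append_of {p r : Q} {w : List σ} (h : M.Reads p w r) :
    ∀ u v, w = u ++ v → ∃ q, M.Reads p u q ∧ M.Reads q v r := by
  induction h with
  | refl p =>
    rintro u v hw
    obtain ⟨rfl, rfl⟩ := List.append_eq_nil_iff.mp hw.symm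
    exact ⟨p, Reads.refl p, Reads.refl p⟩
  | eps hstep h ih =>
    rintro u v rfl
    obtain ⟨q, h1, h2⟩ := ih u v rfl
    exact ⟨q, Reads.eps hstep h1, h2⟩
  | @cons p q r a w g hstep h ih =>
    rintro u v hw
    cases u with
    | nil =>
      simp only [List.nil_append] at hw
      subst hw
      exact ⟨p, Reads.refl p, Reads.cons g hstep h⟩
    | cons b u' =>
      simp only [List.cons_append, List.cons.injEq] at hw
      obtain ⟨rfl, rfl⟩ := hw
      obtain ⟨q', h1, h2⟩ := ih u' v rfl
      exact ⟨q', Reads.cons g hstep h1, h2⟩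

lemma reads_single_of {p q : Q} {w : List σ} (h : M.Reads p w q) :
    ∀ a, w = [a] → ∃ (p' : Q) (g : Option γ) (r : Q),
      M.EpsCl p p' ∧ M.step p' (some a) g r ∧ M.EpsCl r q := by
  induction h with
  | refl => intro a h; simp at h
  | eps hstep _ ih =>
    intro a hw
    obtain ⟨p', g, r, h1, h2, h3⟩ := ih a hw
    exact ⟨p', g, r, Relation.ReflTransGen.head hstep h1, h2, h3⟩
  | cons g hstep h ih =>
    intro b hw
    obtain ⟨rfl, rfl⟩ : _ ∧ _ := by simpa using hw
    exact ⟨_, g, _, Relation.ReflTransGen.refl, hstep, M.reads_nil_of h rfl⟩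

lemma runT_append (S : Set Q) (w : List σ) (a : σ) :
    M.runT S (w ++ [a]) = M.Tfun (M.runT S w) a := by
  simp [runT, List.foldl_append]

lemma runTC_append (S : Set Q) (w : List σ) (a : σ) :
    M.runTC S (w ++ [a]) = M.TCfun (M.runTC S w) a := by
  simp [runTC, List.foldl_append]

lemma runT_eq_s14 (w : List σ) :
    M.runT (M.epsClSet M.I) w = {q | ∃ i ∈ M.I, M.Reads i w q} := by
  induction w using List.reverseRecOn with
  | nil =>
    ext q
    constructor
    · rintro ⟨i, hi, hc⟩; exact ⟨i, hi, M.reads_of_epsCl hc⟩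
    · rintro ⟨i, hi, hr⟩; exact ⟨i, hi, M.reads_nil_of hr rfl⟩
  | append_singleton w a ih =>
    rw [runT_append, ih]
    ext q
    constructor
    · rintro ⟨r, ⟨p, ⟨i, hi, hrd⟩, g, hstep⟩, hc⟩
      exact ⟨i, hi, M.reads_append_mk hrd (Reads.cons g hstep (M.reads_of_epsCl hc))⟩
    · rintro ⟨i, hi, hrd⟩
      obtain ⟨p, h1, h2⟩ := M.reads_append_of hrd w [a] rfl
      obtain ⟨p', g, r, hc1, hstep, hc2⟩ := M.reads_single_of h2 a rfl
      have hp' : M.Reads i w p' := by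
        have := M.reads_append_mk h1 (M.reads_of_epsCl hc1)
        rwa [List.append_nil] at this
      exact ⟨r, ⟨p', ⟨i, hi, hp'⟩, g, hstep⟩, hc2⟩

lemma Gfun_runT (v : List σ) (a : σ) :
    M.Gfun (M.runT (M.epsClSet M.I) v) a = M.machineBeh (v ++ [a]) := by
  rw [Gfun_eq, runT_eq_s14]
  ext g
  simp only [machineBeh, Set.mem_iUnion, beh, Set.mem_setOf_eq]
  constructor
  · rintro ⟨p, ⟨i, hi, hrd⟩, g', q, hstep, hcond⟩
    exact ⟨i, hi, Or.inr ⟨v, a, rfl, g', p, q, hrd, hstep, hcond⟩⟩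
  · rintro ⟨i, hi, (⟨hnil, _⟩ | ⟨w', a', heq, g', q, r, hrd, hstep, hcond⟩)⟩
    · exact absurd hnil (by simp)
    · obtain ⟨rfl, hl⟩ := List.append_inj' heq rfl
      obtain rfl : a = a' := by simpa using hl
      exact ⟨q, ⟨i, hi, hrd⟩, g', r, hstep, hcond⟩

lemma runTC_eq (w : List σ) :
    M.runTC (M.epsClSet M.I) w =
      {q | ∃ u v, w = u ++ v ∧ q ∈ M.runT (M.epsClSet M.I) v} := by
  induction w using List.reverseRecOn with
  | nil =>
    ext q
    constructor
    · intro h; exact ⟨[], [], rfl, h⟩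
    · rintro ⟨u, v, huv, h⟩
      obtain ⟨rfl, rfl⟩ := List.append_eq_nil_iff.mp huv.symm
      exact h
  | append_singleton w a ih =>
    rw [runTC_append, TCfun, ih]
    ext q
    constructor
    · rintro (⟨r, ⟨p, ⟨u, v, rfl, hp⟩, g, hs⟩, hc⟩ | hE)
      · refine ⟨u, v ++ [a], by simp, ?_⟩
        rw [runT_append]
        exact ⟨r, ⟨p, hp, g, hs⟩, hc⟩
      · exact ⟨w ++ [a], [], by simp, hE⟩
    · rintro ⟨u, v, huv, hq⟩
      rcases v.eq_nil_or_concat with rfl | ⟨v', a', rfl⟩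
      · rw [List.append_nil] at huv
        subst huv
        exact Or.inr hq
      · rw [List.concat_eq_append, ← List.append_assoc] at huv
        obtain ⟨rfl, hl⟩ := List.append_inj' huv rfl
        obtain rfl : a = a' := by simpa using hl
        rw [List.concat_eq_append, runT_append] at hq
        obtain ⟨r, ⟨p, hp, g, hs⟩, hc⟩ := hq
        exact Or.inl ⟨r, ⟨p, ⟨u, v', rfl, hp⟩, g, hs⟩, hc⟩

end FST

/-- For any FST `M` whose behaviour is that of the pattern regexp `e`
(as obtained by Thompson's construction) and which emits no output before reading input, the
Mealy machine computed by `subsetTC` performs complete regexp matching of `e`: its output on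
any `w` is the union over all decompositions `w = w'·w''` of `B(e)(w'')`. -/
theorem stmt14 {Q σ γ : Type} (M : FST Q σ γ) (e : RegularExpression (σ × Option γ))
    (h0 : ∀ p ∈ M.I, M.behNil p = ∅)
    (he : ∀ w : List σ, M.machineBeh w = rBeh e w) :
    ∀ w : List σ, M.subsetTCBeh w =
      {g | ∃ w' w'' : List σ, w = w' ++ w'' ∧ g ∈ rBeh e w''} := by
  intro w
  ext g
  simp only [FST.subsetTCBeh, Set.mem_setOf_eq]
  constructor
  · rintro ⟨w', a, rfl, hg⟩
    rw [M.Gfun_eq] at hg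
    obtain ⟨p, hp, g', q, hs, hc⟩ := hg
    rw [M.runTC_eq] at hp
    obtain ⟨u, v, rfl, hpv⟩ := hp
    have h1 : g ∈ M.Gfun (M.runT (M.epsClSet M.I) v) a := by
      rw [M.Gfun_eq]; exact ⟨p, hpv, g', q, hs, hc⟩
    rw [M.Gfun_runT, he] at h1
    exact ⟨u, v ++ [a], by simp, h1⟩
  · rintro ⟨w1, w2, rfl, hg⟩
    rw [← he] at hg
    rcases w2.eq_nil_or_concat with rfl | ⟨v, a, rfl⟩
    · exfalso
      simp only [FST.machineBeh, Set.mem_iUnion] at hg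
      obtain ⟨i, hi, hb⟩ := hg
      rcases hb with ⟨_, hnil⟩ | ⟨w', a, habs, _⟩
      · rw [h0 i hi] at hnil; exact hnil
      · exact absurd habs (by simp)
    · rw [List.concat_eq_append] at hg ⊢
      rw [← M.Gfun_runT] at hg
      refine ⟨w1 ++ v, a, by simp, ?_⟩
      rw [M.Gfun_eq] at hg ⊢
      obtain ⟨p, hp, rest⟩ := hg
      refine ⟨p, ?_, rest⟩
      rw [M.runTC_eq]
      exact ⟨w1, v, rfl, hp⟩
end

section
/- Applying the subset construction subsetTC (which adds the initial closure to every transition target) to an NFA N for e yields a DFA accepting exactly Σ*·L(e), i.e., it is equivalent to applying the standard subset construction to the NFA for (σ₁+…+σₙ)*·e. -/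
/-- The DFA computed by the modified subset construction `subsetTC` from an NFA (with
ε-transitions) `N`: the transition function adds the initial closure `ε(I)` to every
transition target, the initial state is `ε(I)`, and the final states are the subsets
intersecting the final states of `N`. -/
def subsetTCDFA {α σ : Type} (N : εNFA α σ) : DFA α (Set σ) where
  step := fun S a => N.stepSet S a ∪ N.εClosure N.start
  start := N.εClosure N.start
  accept := {S | ∃ q ∈ S, q ∈ N.accept}

lemma subsetTC_eval {α σ : Type} (N : εNFA α σ) (x : List α) :
    (subsetTCDFA N).eval x = ⋃ y ∈ {y : List α | y <:+ x}, N.eval y := by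
  induction x using List.reverseRecOn with
  | nil =>
    ext s
    simp [DFA.eval, DFA.evalFrom, subsetTCDFA, List.suffix_nil, εNFA.eval, εNFA.evalFrom]
  | append_singleton x a ih =>
    rw [DFA.eval_append_singleton, ih]
    ext s
    simp only [subsetTCDFA, Set.mem_union, Set.mem_iUnion, εNFA.mem_stepSet_iff,
      Set.mem_setOf_eq, exists_prop]
    constructor
    · rintro (⟨t, ⟨y, hy, ht⟩, hs⟩ | hs)
      · exact ⟨y ++ [a], by obtain ⟨t, rfl⟩ := hy; exact ⟨t, (List.append_assoc ..).symm⟩, by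
          rw [εNFA.eval_append_singleton, εNFA.mem_stepSet_iff]; exact ⟨t, ht, hs⟩⟩
      · exact ⟨[], List.nil_suffix, hs⟩
    · rintro ⟨y, hy, hs⟩
      rcases List.suffix_concat_iff.mp hy with rfl | ⟨z, rfl, hz⟩
      · exact Or.inr hs
      · rw [εNFA.eval_append_singleton, εNFA.mem_stepSet_iff] at hs
        obtain ⟨t, ht, hs⟩ := hs
        exact Or.inl ⟨t, ⟨z, hz, ht⟩, hs⟩

/-- Applying `subsetTC` to an NFA `N` for the regexp `e` yields a DFA
accepting exactly `Σ* · L(e)` — i.e. it is equivalent to applying the standard subset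
construction to the NFA for `(σ₁ + … + σₙ)* · e`. -/
theorem stmt17 {α σ : Type} (N : εNFA α σ) (e : RegularExpression α)
    (h : N.accepts = e.matches') :
    (subsetTCDFA N).accepts = (⊤ : Language α) * e.matches' := by
  rw [← h]
  ext x
  rw [Language.mem_mul]
  have := subsetTC_eval N x
  constructor
  · intro hx
    have hx' : (subsetTCDFA N).eval x ∈ (subsetTCDFA N).accept := hx
    rw [this] at hx'
    obtain ⟨q, hq, hqa⟩ := hx'
    simp only [Set.mem_iUnion, Set.mem_setOf_eq, exists_prop] at hq
    obtain ⟨y, ⟨z, rfl⟩, hy⟩ := hq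
    exact ⟨z, by trivial, y, ⟨q, hqa, hy⟩, rfl⟩
  · rintro ⟨a, -, b, hb, rfl⟩
    obtain ⟨q, hqa, hq⟩ := hb
    show (subsetTCDFA N).eval (a ++ b) ∈ (subsetTCDFA N).accept
    rw [this]
    refine ⟨q, ?_, hqa⟩
    simp only [Set.mem_iUnion, Set.mem_setOf_eq, exists_prop]
    exact ⟨b, ⟨a, rfl⟩, hq⟩
end
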